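/- Let E be a real normed vector space, let d be a positive integer, and equip Fin d → ℝ with the sup norm ‖x‖ = max_i |x i|. Let σ(t) = 1/(1 + exp(−t)) be the sigmoid. Let c : Fin d → ℝ be fixed, let C̃ : E → (Fin d → ℝ) be Lipschitz with constant L₁ ≥ 0 and satisfy ‖C̃(A) − c‖ ≤ D for all A ∈ E and some D ≥ 0, and let φ_g : E → (Fin d → ℝ) be Lipschitz with constant L_g ≥ 0. Define the gate G(A) i = σ(φ_g(A) i) and the gated residual update U(A) = c + G(A) ⊙ (C̃(A) − c). Then U is Lipschitz with constant L₁ + (D · L_g)/4. -/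

import Mathlib

noncomputable def sig (t : ℝ) : ℝ := 1 / (1 + Real.exp (-t))

lemma one_add_exp_pos (t : ℝ) : 0 < 1 + Real.exp (-t) := by positivity

lemma sig_pos (t : ℝ) : 0 < sig t := by
  unfold sig; positivity

lemma sig_le_one (t : ℝ) : sig t ≤ 1 := by
  unfold sig
  rw [div_le_one (one_add_exp_pos t)]
  nlinarith [Real.exp_pos (-t)]

lemma sig_hasDeriv (t : ℝ) :
    HasDerivAt sig (Real.exp (-t) / (1 + Real.exp (-t))^2) t := by
  have h1 : HasDerivAt (fun t : ℝ => 1 + Real.exp (-t)) (-Real.exp (-t)) t := by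
    simpa using (((Real.hasDerivAt_exp (-t)).comp t (hasDerivAt_neg t)).const_add 1)
  have h2 := h1.inv (ne_of_gt (one_add_exp_pos t))
  have : sig = fun t : ℝ => (1 + Real.exp (-t))⁻¹ := by
    funext t; simp [sig, one_div]
  rw [this]
  have h2' : HasDerivAt (fun t : ℝ => (1 + Real.exp (-t))⁻¹) _ t := h2
  convert h2' using 1
  ring

lemma sig_deriv_bound (t : ℝ) : ‖Real.exp (-t) / (1 + Real.exp (-t))^2‖ ≤ (1/4 : ℝ) := by
  have he := Real.exp_pos (-t)
  rw [Real.norm_eq_abs, abs_of_nonneg (by positivity)]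
  rw [div_le_iff₀ (by positivity)]
  nlinarith [sq_nonneg (1 - Real.exp (-t))]

lemma sig_lipschitz (a b : ℝ) : |sig a - sig b| ≤ (1/4) * |a - b| := by
  have hlip : LipschitzWith (1/4 : NNReal) sig := by
    apply lipschitzWith_of_nnnorm_deriv_le
    · intro t; exact (sig_hasDeriv t).differentiableAt
    · intro t
      rw [(sig_hasDeriv t).deriv]
      have := sig_deriv_bound t
      rw [← NNReal.coe_le_coe]
      simpa [nnnorm, Real.norm_eq_abs] using this
  have := hlip.dist_le_mul a b
  simpa [Real.dist_eq, NNReal.coe_div] using this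

theorem gated_residual_update_lipschitz
    {E : Type*} [NormedAddCommGroup E] [NormedSpace ℝ E]
    (d : ℕ) (hd : 0 < d) (c : Fin d → ℝ)
    (Ctil : E → (Fin d → ℝ)) (L₁ : ℝ) (hL₁ : 0 ≤ L₁)
    (hCtilLip : ∀ x y : E, ‖Ctil x - Ctil y‖ ≤ L₁ * ‖x - y‖)
    (D : ℝ) (hD : 0 ≤ D) (hCtilBdd : ∀ A : E, ‖Ctil A - c‖ ≤ D)
    (φg : E → (Fin d → ℝ)) (Lg : ℝ) (hLg : 0 ≤ Lg)
    (hφg : ∀ x y : E, ‖φg x - φg y‖ ≤ Lg * ‖x - y‖) :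
    ∀ A A' : E,
      ‖(fun i => c i + (1 / (1 + Real.exp (-(φg A i)))) * (Ctil A i - c i))
        - (fun i => c i + (1 / (1 + Real.exp (-(φg A' i)))) * (Ctil A' i - c i))‖
        ≤ (L₁ + D * Lg / 4) * ‖A - A'‖ := by
  intro A A'
  have hrhs : (0:ℝ) ≤ (L₁ + D * Lg / 4) * ‖A - A'‖ := by positivity
  rw [pi_norm_le_iff_of_nonneg hrhs]
  intro i
  have key : (fun i => c i + (1 / (1 + Real.exp (-(φg A i)))) * (Ctil A i - c i)) i
      - (fun i => c i + (1 / (1 + Real.exp (-(φg A' i)))) * (Ctil A' i - c i)) i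
      = sig (φg A i) * (Ctil A i - Ctil A' i)
        + (sig (φg A i) - sig (φg A' i)) * (Ctil A' i - c i) := by
    simp only [sig]; ring
  simp only [Pi.sub_apply]
  rw [show (c i + (1 / (1 + Real.exp (-(φg A i)))) * (Ctil A i - c i))
      - (c i + (1 / (1 + Real.exp (-(φg A' i)))) * (Ctil A' i - c i))
      = sig (φg A i) * (Ctil A i - Ctil A' i)
        + (sig (φg A i) - sig (φg A' i)) * (Ctil A' i - c i) from key]
  have h1 : ‖Ctil A i - Ctil A' i‖ ≤ L₁ * ‖A - A'‖ := by
    calc ‖Ctil A i - Ctil A' i‖ = ‖(Ctil A - Ctil A') i‖ := by simp [Pi.sub_apply]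
    _ ≤ ‖Ctil A - Ctil A'‖ := norm_le_pi_norm _ i
    _ ≤ L₁ * ‖A - A'‖ := hCtilLip A A'
  have h2 : ‖φg A i - φg A' i‖ ≤ Lg * ‖A - A'‖ := by
    calc ‖φg A i - φg A' i‖ = ‖(φg A - φg A') i‖ := by simp [Pi.sub_apply]
    _ ≤ ‖φg A - φg A'‖ := norm_le_pi_norm _ i
    _ ≤ Lg * ‖A - A'‖ := hφg A A'
  have h3 : ‖Ctil A' i - c i‖ ≤ D := by
    calc ‖Ctil A' i - c i‖ = ‖(Ctil A' - c) i‖ := by simp [Pi.sub_apply]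
    _ ≤ ‖Ctil A' - c‖ := norm_le_pi_norm _ i
    _ ≤ D := hCtilBdd A'
  have hs1 : |sig (φg A i)| ≤ 1 := by
    rw [abs_of_pos (sig_pos _)]; exact sig_le_one _
  have hs2 : |sig (φg A i) - sig (φg A' i)| ≤ (1/4) * |φg A i - φg A' i| :=
    sig_lipschitz _ _
  simp only [Real.norm_eq_abs] at *
  calc |sig (φg A i) * (Ctil A i - Ctil A' i) + (sig (φg A i) - sig (φg A' i)) * (Ctil A' i - c i)|
      ≤ |sig (φg A i)| * |Ctil A i - Ctil A' i| + |sig (φg A i) - sig (φg A' i)| * |Ctil A' i - c i| := by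
        refine (abs_add_le _ _).trans ?_
        rw [abs_mul, abs_mul]
    _ ≤ 1 * (L₁ * ‖A - A'‖) + ((1/4) * (Lg * ‖A - A'‖)) * D := by
        have hs2' : |sig (φg A i) - sig (φg A' i)| ≤ (1/4) * (Lg * ‖A - A'‖) := by
          nlinarith [hs2, h2, abs_nonneg (φg A i - φg A' i)]
        have := abs_nonneg (Ctil A i - Ctil A' i)
        have := abs_nonneg (Ctil A' i - c i)
        have := abs_nonneg (sig (φg A i))
        have := abs_nonneg (sig (φg A i) - sig (φg A' i))
        nlinarith [hs1, h1, h3, hs2']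
    _ = (L₁ + D * Lg / 4) * ‖A - A'‖ := by ring
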